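/- Let ω > 0 and b > 0, and let d₀, d₁, e₀, e₁, K be positive constants as in the cosine equilibrium. Define SPer(t) = (2·b·φ₀/(K·ω))·d₁·e₀·[(d₀·d₁ + e₀·e₁)·sin(ω·t) + d₀·e₁·cos(ω·t)]. Then the amplitude of SPer, defined as (1/2)·(max − min) over one period, equals (2·b·φ₀/ω)·d₁·e₀·√((d₀·d₁ + e₀·e₁)² + d₀²·e₁²)/K, and this is at most (2·b·φ₀/ω)·e₀/d₀. -/

import Mathlib

set_option maxHeartbeats 1000000

lemma price_aux_key (A B R x : ℝ) (hR2 : R ^ 2 = A ^ 2 + B ^ 2) :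
    (A * Real.sin x + B * Real.cos x) ^ 2 ≤ R ^ 2 := by
  nlinarith [Real.sin_sq_add_cos_sq x, sq_nonneg (A * Real.cos x - B * Real.sin x)]

lemma price_aux_le (y R : ℝ) (hR : 0 < R) (h : y ^ 2 ≤ R ^ 2) : -R ≤ y ∧ y ≤ R := by
  constructor <;> nlinarith [sq_nonneg (y + R), sq_nonneg (y - R)]


theorem price_periodic_amplitude (ω b φ₀ d₀ d₁ e₀ e₁ K : ℝ)
    (hω : 0 < ω) (hb : 0 < b) (hφ₀ : 0 < φ₀)
    (hd₀ : 0 < d₀) (hd₁ : 0 < d₁) (he₀ : 0 < e₀) (he₁ : 0 < e₁)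
    (hK : K = d₀ ^ 2 * d₁ ^ 2 + 2 * d₀ * d₁ * e₀ * e₁ + d₀ ^ 2 * e₁ ^ 2 + e₀ ^ 2 * e₁ ^ 2)
    (SPer : ℝ → ℝ)
    (hS : ∀ t, SPer t = (2 * b * φ₀ / (K * ω)) * d₁ * e₀ *
      ((d₀ * d₁ + e₀ * e₁) * Real.sin (ω * t) + d₀ * e₁ * Real.cos (ω * t))) :
    (1 / 2) * (sSup (SPer '' Set.Icc 0 (2 * Real.pi / ω))
        - sInf (SPer '' Set.Icc 0 (2 * Real.pi / ω)))
      = (2 * b * φ₀ / ω) * d₁ * e₀ *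
          Real.sqrt ((d₀ * d₁ + e₀ * e₁) ^ 2 + d₀ ^ 2 * e₁ ^ 2) / K ∧
    (2 * b * φ₀ / ω) * d₁ * e₀ *
          Real.sqrt ((d₀ * d₁ + e₀ * e₁) ^ 2 + d₀ ^ 2 * e₁ ^ 2) / K
      ≤ (2 * b * φ₀ / ω) * e₀ / d₀ := by
  set A := d₀ * d₁ + e₀ * e₁ with hAdef
  set B := d₀ * e₁ with hBdef
  have hA : 0 < A := by positivity
  have hB : 0 < B := by positivity
  have hKpos : 0 < K := by rw [hK]; positivity
  set R := Real.sqrt (A ^ 2 + B ^ 2) with hRdef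
  have hR2 : R ^ 2 = A ^ 2 + B ^ 2 := Real.sq_sqrt (by positivity)
  have hRpos : 0 < R := Real.sqrt_pos.mpr (by positivity)
  set C := (2 * b * φ₀ / (K * ω)) * d₁ * e₀ with hCdef
  have hCpos : 0 < C := by positivity
  have hBR : B / R ≤ 1 := by
    rw [div_le_one hRpos]
    nlinarith [hR2, hRpos, hA, hB]
  have hBR' : (-1 : ℝ) ≤ B / R :=
    le_trans (by norm_num : (-1:ℝ) ≤ 0) (div_nonneg hB.le hRpos.le)
  have hcosθ : Real.cos (Real.arccos (B / R)) = B / R := Real.cos_arccos hBR' hBR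
  have hsinθ : Real.sin (Real.arccos (B / R)) = A / R := by
    rw [Real.sin_arccos]
    have h : 1 - (B / R) ^ 2 = (A / R) ^ 2 := by
      field_simp
      nlinarith [hR2]
    rw [h, Real.sqrt_sq (by positivity)]
  set θ := Real.arccos (B / R) with hθdef
  have hθ0 : 0 ≤ θ := Real.arccos_nonneg _
  have hθπ : θ ≤ Real.pi := Real.arccos_le_pi _
  have hπ : 0 < Real.pi := Real.pi_pos
  have hK' : K = A ^ 2 + B ^ 2 := by rw [hK, hAdef, hBdef]; ring
  have h2 : d₀ * d₁ ≤ A := by rw [hAdef]; nlinarith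
  have hRR : Real.sqrt (A ^ 2 + d₀ ^ 2 * e₁ ^ 2) = R := by
    rw [hRdef, hBdef]; ring_nf
  clear_value θ
  clear_value R C
  clear_value A B
  have key : ∀ x : ℝ, (A * Real.sin x + B * Real.cos x) ^ 2 ≤ R ^ 2 :=
    fun x => price_aux_key A B R x hR2
  have hub : ∀ t, SPer t ≤ C * R := by
    intro t
    rw [hS t]
    have h1 : A * Real.sin (ω * t) + B * Real.cos (ω * t) ≤ R :=
      (price_aux_le _ R hRpos (key (ω * t))).2
    exact mul_le_mul_of_nonneg_left h1 hCpos.le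
  have hlb : ∀ t, -(C * R) ≤ SPer t := by
    intro t
    rw [hS t]
    have h1 : -R ≤ A * Real.sin (ω * t) + B * Real.cos (ω * t) :=
      (price_aux_le _ R hRpos (key (ω * t))).1
    have h3 := mul_le_mul_of_nonneg_left h1 hCpos.le
    rw [mul_neg] at h3
    exact h3
  have hmemmax : C * R ∈ SPer '' Set.Icc 0 (2 * Real.pi / ω) := by
    refine ⟨θ / ω, ⟨by positivity, by gcongr; linarith⟩, ?_⟩
    rw [hS, mul_div_cancel₀ _ hω.ne', hsinθ, hcosθ]
    field_simp
    nlinarith [hR2]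
  have hmemmin : -(C * R) ∈ SPer '' Set.Icc 0 (2 * Real.pi / ω) := by
    refine ⟨(θ + Real.pi) / ω, ⟨by positivity, by gcongr; linarith⟩, ?_⟩
    rw [hS, mul_div_cancel₀ _ hω.ne', Real.sin_add_pi, Real.cos_add_pi, hsinθ, hcosθ]
    field_simp
    linear_combination hR2
  have hsup : sSup (SPer '' Set.Icc 0 (2 * Real.pi / ω)) = C * R :=
    IsGreatest.csSup_eq ⟨hmemmax, by rintro x ⟨t, _, rfl⟩; exact hub t⟩
  have hinf : sInf (SPer '' Set.Icc 0 (2 * Real.pi / ω)) = -(C * R) :=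
    IsLeast.csInf_eq ⟨hmemmin, by rintro x ⟨t, _, rfl⟩; exact hlb t⟩
  constructor
  · rw [hsup, hinf, hRR, hCdef]
    field_simp
    ring
  · rw [hRR]
    have hRK : d₀ * d₁ * R ≤ K := by
      have h1 : A ≤ R := by nlinarith [hR2, hRpos]
      nlinarith [mul_le_mul_of_nonneg_right (h2.trans h1) hRpos.le, hR2]
    rw [div_le_div_iff₀ hKpos hd₀]
    have hpos : (0:ℝ) ≤ 2 * b * φ₀ / ω * e₀ := by positivity
    nlinarith [mul_le_mul_of_nonneg_left hRK hpos]
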